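/- For X ~ N(d,1) with |d| > u > 0, E[X² | |X| > u] ≥ d² + 1. -/

import Mathlib

open MeasureTheory Real

/-- Standard normal density. -/
noncomputable def phi (x : ℝ) : ℝ := (Real.sqrt (2 * π))⁻¹ * Real.exp (-x ^ 2 / 2)

/-- Standard normal CDF. -/
noncomputable def Phi (x : ℝ) : ℝ := ∫ t in Set.Iic x, phi t

open Set Filter Topology

lemma sqrt2pi_pos : 0 < Real.sqrt (2 * π) := Real.sqrt_pos.mpr (by positivity)

lemma phi_pos (x : ℝ) : 0 < phi x :=
  mul_pos (inv_pos.mpr sqrt2pi_pos) (Real.exp_pos _)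

lemma phi_nonneg (x : ℝ) : 0 ≤ phi x := (phi_pos x).le

lemma phi_even (x : ℝ) : phi (-x) = phi x := by simp [phi, neg_sq]

lemma exp_half_eq (x : ℝ) : Real.exp (-2⁻¹ * x ^ 2) = Real.exp (-x ^ 2 / 2) :=
  congrArg Real.exp (by ring)

lemma integrable_exp_half : Integrable (fun x : ℝ => Real.exp (-x ^ 2 / 2)) := by
  refine (integrable_exp_neg_mul_sq (by norm_num : (0:ℝ) < 2⁻¹)).congr
    (Eventually.of_forall fun x => ?_)
  show Real.exp (-2⁻¹ * x ^ 2) = Real.exp (-x ^ 2 / 2)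
  exact exp_half_eq x

lemma integrable_id_exp_half : Integrable (fun x : ℝ => x * Real.exp (-x ^ 2 / 2)) := by
  refine (integrable_mul_exp_neg_mul_sq (by norm_num : (0:ℝ) < 2⁻¹)).congr
    (Eventually.of_forall fun x => ?_)
  show x * Real.exp (-2⁻¹ * x ^ 2) = x * Real.exp (-x ^ 2 / 2)
  rw [exp_half_eq]

lemma integrable_sq_exp_half : Integrable (fun x : ℝ => x ^ 2 * Real.exp (-x ^ 2 / 2)) := by
  have h := integrable_rpow_mul_exp_neg_mul_sq (by norm_num : (0:ℝ) < 2⁻¹)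
    (by norm_num : (-1:ℝ) < 2)
  refine h.congr (Eventually.of_forall fun x => ?_)
  show x ^ (2:ℝ) * Real.exp (-2⁻¹ * x ^ 2) = x ^ 2 * Real.exp (-x ^ 2 / 2)
  rw [Real.rpow_two, exp_half_eq]

lemma integral_exp_half : ∫ x : ℝ, Real.exp (-x ^ 2 / 2) = Real.sqrt (2 * π) := by
  have h := integral_gaussian (2⁻¹ : ℝ)
  rw [show π / (2⁻¹:ℝ) = 2 * π by ring] at h
  rw [← h]
  exact integral_congr_ae (Eventually.of_forall fun x => (exp_half_eq x).symm)

lemma integral_phi : ∫ x : ℝ, phi x = 1 := by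
  unfold phi
  rw [integral_const_mul, integral_exp_half, inv_mul_cancel₀ sqrt2pi_pos.ne']

lemma integrable_phi : Integrable phi := by
  have := integrable_exp_half.const_mul ((Real.sqrt (2 * π))⁻¹)
  exact this.congr (Eventually.of_forall fun x => rfl)

lemma integrable_id_phi : Integrable (fun x : ℝ => x * phi x) := by
  refine (integrable_id_exp_half.const_mul ((Real.sqrt (2 * π))⁻¹)).congr
    (Eventually.of_forall fun x => ?_)
  simp only [phi]; ring

lemma integrable_sq_phi : Integrable (fun x : ℝ => x ^ 2 * phi x) := by
  refine (integrable_sq_exp_half.const_mul ((Real.sqrt (2 * π))⁻¹)).congr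
    (Eventually.of_forall fun x => ?_)
  simp only [phi]; ring

lemma integral_id_phi : ∫ x : ℝ, x * phi x = 0 := by
  have h := integral_neg_eq_self (fun x : ℝ => x * phi x) (volume : Measure ℝ)
  simp only [phi_even, neg_mul] at h
  rw [integral_neg] at h
  linarith

lemma tendsto_aux : Tendsto (fun x : ℝ => -x * Real.exp (-x ^ 2 / 2)) atTop (𝓝 0) := by
  have h0 := tendsto_rpow_abs_mul_exp_neg_mul_sq_cocompact (by norm_num : (0:ℝ) < 2⁻¹) 1
  have h1 : Tendsto (fun x : ℝ => |x| ^ (1:ℝ) * Real.exp (-2⁻¹ * x ^ 2)) atTop (𝓝 0) :=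
    h0.mono_left (by rw [cocompact_eq_atBot_atTop]; exact le_sup_right)
  have h2 := h1.neg
  rw [neg_zero] at h2
  refine h2.congr' ?_
  filter_upwards [eventually_ge_atTop (0:ℝ)] with x hx
  rw [Real.rpow_one, abs_of_nonneg hx, exp_half_eq]
  ring

lemma integral_sq_exp_half_Ioi :
    ∫ x in Ioi (0:ℝ), x ^ 2 * Real.exp (-x ^ 2 / 2) = ∫ x in Ioi (0:ℝ), Real.exp (-x ^ 2 / 2) := by
  have hderiv : ∀ x ∈ Ici (0:ℝ), HasDerivAt (fun x : ℝ => -x * Real.exp (-x ^ 2 / 2))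
      (x ^ 2 * Real.exp (-x ^ 2 / 2) - Real.exp (-x ^ 2 / 2)) x := by
    intro x _
    have h1 : HasDerivAt (fun x : ℝ => -x ^ 2 / 2) (-x) x := by
      have := ((hasDerivAt_pow 2 x).neg).div_const 2
      simp only [Pi.neg_apply] at this
      refine this.congr_deriv ?_
      push_cast
      ring
    have h2 := h1.exp
    have h3 := ((hasDerivAt_id x).neg).mul h2
    simp only [Pi.neg_def, Pi.mul_def, id_eq] at h3
    refine h3.congr_deriv ?_
    ring
  have hint : IntegrableOn
      (fun x : ℝ => x ^ 2 * Real.exp (-x ^ 2 / 2) - Real.exp (-x ^ 2 / 2)) (Ioi 0) :=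
    (integrable_sq_exp_half.sub integrable_exp_half).integrableOn
  have key := integral_Ioi_of_hasDerivAt_of_tendsto' hderiv hint tendsto_aux
  simp only [neg_zero, zero_mul, sub_zero] at key
  rw [integral_sub integrable_sq_exp_half.integrableOn integrable_exp_half.integrableOn] at key
  linarith

lemma integral_sq_exp_half : ∫ x : ℝ, x ^ 2 * Real.exp (-x ^ 2 / 2) = Real.sqrt (2 * π) := by
  have h1 := integral_comp_abs (f := fun t : ℝ => t ^ 2 * Real.exp (-t ^ 2 / 2))
  have h2 := integral_comp_abs (f := fun t : ℝ => Real.exp (-t ^ 2 / 2))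
  calc ∫ x : ℝ, x ^ 2 * Real.exp (-x ^ 2 / 2)
      = ∫ x : ℝ, (fun t : ℝ => t ^ 2 * Real.exp (-t ^ 2 / 2)) |x| :=
        integral_congr_ae (Eventually.of_forall fun x => by simp [sq_abs])
    _ = 2 * ∫ x in Ioi (0:ℝ), x ^ 2 * Real.exp (-x ^ 2 / 2) := h1
    _ = 2 * ∫ x in Ioi (0:ℝ), Real.exp (-x ^ 2 / 2) := by rw [integral_sq_exp_half_Ioi]
    _ = ∫ x : ℝ, (fun t : ℝ => Real.exp (-t ^ 2 / 2)) |x| := h2.symm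
    _ = ∫ x : ℝ, Real.exp (-x ^ 2 / 2) :=
        integral_congr_ae (Eventually.of_forall fun x => by simp [sq_abs])
    _ = Real.sqrt (2 * π) := integral_exp_half

lemma integral_sq_phi : ∫ x : ℝ, x ^ 2 * phi x = 1 := by
  have h : ∫ x : ℝ, x ^ 2 * phi x
      = ∫ x : ℝ, (Real.sqrt (2 * π))⁻¹ * (x ^ 2 * Real.exp (-x ^ 2 / 2)) := by
    refine integral_congr_ae (Eventually.of_forall fun x => ?_)
    simp only [phi]; ring
  rw [h, integral_const_mul, integral_sq_exp_half, inv_mul_cancel₀ sqrt2pi_pos.ne']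

lemma setIntegral_Iic_sub (f : ℝ → ℝ) (a c : ℝ) :
    ∫ x in Iic a, f (x - c) = ∫ x in Iic (a - c), f x := by
  rw [← integral_indicator measurableSet_Iic, ← integral_indicator measurableSet_Iic,
    ← integral_sub_right_eq_self ((Iic (a - c)).indicator f) c]
  congr 1
  funext x
  by_cases h : x ≤ a
  · rw [indicator_of_mem (mem_Iic.mpr h), indicator_of_mem (mem_Iic.mpr (by linarith))]
  · rw [indicator_of_notMem (by simpa using h),
      indicator_of_notMem (by simp only [mem_Iic, not_le] at h ⊢; linarith)]

lemma setIntegral_Ioi_sub (f : ℝ → ℝ) (a c : ℝ) :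
    ∫ x in Ioi a, f (x - c) = ∫ x in Ioi (a - c), f x := by
  rw [← integral_indicator measurableSet_Ioi, ← integral_indicator measurableSet_Ioi,
    ← integral_sub_right_eq_self ((Ioi (a - c)).indicator f) c]
  congr 1
  funext x
  by_cases h : a < x
  · rw [indicator_of_mem (mem_Ioi.mpr h), indicator_of_mem (mem_Ioi.mpr (by linarith))]
  · rw [indicator_of_notMem (by simpa using h),
      indicator_of_notMem (by simp only [mem_Ioi, not_lt] at h ⊢; linarith)]

lemma integral_Ioi_phi (a : ℝ) : ∫ x in Ioi a, phi x = Phi (-a) := by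
  have h : ∫ x in Ioi a, phi x = ∫ x in Ioi a, phi (-x) :=
    setIntegral_congr_fun measurableSet_Ioi fun x _ => (phi_even x).symm
  rw [h, integral_comp_neg_Ioi]
  rfl

lemma Phi_pos (a : ℝ) : 0 < Phi a := by
  unfold Phi
  refine (setIntegral_pos_iff_support_of_nonneg_ae
    (ae_of_all _ fun x => phi_nonneg x) integrable_phi.integrableOn).mpr ?_
  have hs : Function.support phi = univ := eq_univ_of_forall fun x => (phi_pos x).ne'
  rw [hs, univ_inter, Real.volume_Iic]
  simp

lemma denom_eq (d u : ℝ) (hu : 0 < u) :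
    ∫ x in {x : ℝ | u < |x|}, phi (x - d) = Phi (d - u) + Phi (-d - u) := by
  have hset : {x : ℝ | u < |x|} = Iio (-u) ∪ Ioi u := by
    ext x
    rw [mem_setOf_eq, lt_abs, mem_union, mem_Iio, mem_Ioi, lt_neg, or_comm]
  have hint : Integrable (fun x : ℝ => phi (x - d)) := integrable_phi.comp_sub_right d
  have hdisj : Disjoint (Iio (-u)) (Ioi u) :=
    (Iic_disjoint_Ioi (by linarith : -u ≤ u)).mono_left Iio_subset_Iic_self
  rw [hset, setIntegral_union hdisj measurableSet_Ioi hint.integrableOn hint.integrableOn]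
  have h1 : ∫ x in Iio (-u), phi (x - d) = Phi (-d - u) := by
    have : ∫ x in Iio (-u), phi (x - d) = ∫ x in Iic (-u), phi (x - d) := by
      refine setIntegral_congr_set ?_
      exact Iio_ae_eq_Iic
    rw [this, setIntegral_Iic_sub]
    rw [show -u - d = -d - u by ring]
    rfl
  have h2 : ∫ x in Ioi u, phi (x - d) = Phi (d - u) := by
    rw [setIntegral_Ioi_sub, integral_Ioi_phi, show -(u - d) = d - u by ring]
  rw [h1, h2]
  ring

/-- For X ~ N(d,1) with |d| > u > 0, E[X² | |X| > u] ≥ d² + 1. -/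
theorem stmt7 (d u : ℝ) (hu : 0 < u) (hd : u < |d|) :
    d ^ 2 + 1 ≤
      (∫ x in {x : ℝ | u < |x|}, x ^ 2 * phi (x - d)) / (Phi (d - u) + Phi (-d - u)) := by
  set S : Set ℝ := {x : ℝ | u < |x|} with hSdef
  have hSm : MeasurableSet S := measurableSet_lt measurable_const continuous_abs.measurable
  have hint_g : Integrable (fun x : ℝ => phi (x - d)) := integrable_phi.comp_sub_right d
  have hint_f : Integrable (fun x : ℝ => x ^ 2 * phi (x - d)) := by
    have hQ : Integrable (fun y : ℝ => (y + d) ^ 2 * phi y) := by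
      have h : Integrable (fun y : ℝ =>
          y ^ 2 * phi y + (2 * d) * (y * phi y) + d ^ 2 * phi y) :=
        (integrable_sq_phi.add (integrable_id_phi.const_mul _)).add (integrable_phi.const_mul _)
      exact h.congr (ae_of_all _ fun y => by ring)
    exact (hQ.comp_sub_right d).congr (ae_of_all _ fun x => by
      show (x - d + d) ^ 2 * phi (x - d) = x ^ 2 * phi (x - d)
      ring)
  have h_total_f : ∫ x : ℝ, x ^ 2 * phi (x - d) = d ^ 2 + 1 := by
    have h1 : ∫ x : ℝ, x ^ 2 * phi (x - d) = ∫ y : ℝ, (y + d) ^ 2 * phi y := by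
      rw [← integral_sub_right_eq_self (fun y : ℝ => (y + d) ^ 2 * phi y) d]
      refine integral_congr_ae (ae_of_all _ fun x => ?_)
      show x ^ 2 * phi (x - d) = (x - d + d) ^ 2 * phi (x - d)
      ring
    have h2 : ∫ y : ℝ, (y + d) ^ 2 * phi y
        = ∫ y : ℝ, (y ^ 2 * phi y + (2 * d) * (y * phi y) + d ^ 2 * phi y) :=
      integral_congr_ae (ae_of_all _ fun y => by ring)
    have i1 : Integrable (fun y : ℝ => y ^ 2 * phi y + 2 * d * (y * phi y)) :=
      integrable_sq_phi.add (integrable_id_phi.const_mul _)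
    have i2 : Integrable (fun y : ℝ => d ^ 2 * phi y) := integrable_phi.const_mul _
    have i3 : Integrable (fun y : ℝ => 2 * d * (y * phi y)) := integrable_id_phi.const_mul _
    rw [h1, h2, integral_add i1 i2, integral_add integrable_sq_phi i3,
      integral_const_mul, integral_const_mul, integral_sq_phi, integral_id_phi, integral_phi]
    ring
  have h_total_g : ∫ x : ℝ, phi (x - d) = 1 := by
    rw [integral_sub_right_eq_self phi d]
    exact integral_phi
  have hcompl : Sᶜ = Icc (-u) u := by
    ext x
    simp [hSdef, not_lt, abs_le]
  have hA : ∫ x in Sᶜ, x ^ 2 * phi (x - d)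
      ≤ (d ^ 2 + 1) * ∫ x in Sᶜ, phi (x - d) := by
    rw [← integral_const_mul]
    refine setIntegral_mono_on hint_f.integrableOn
      ((hint_g.const_mul _).integrableOn) hSm.compl fun x hx => ?_
    rw [hcompl] at hx
    have hx2 : x ^ 2 ≤ u ^ 2 := sq_le_sq' hx.1 hx.2
    have hd2 : u ^ 2 ≤ d ^ 2 := by nlinarith [sq_abs d, abs_nonneg d]
    have hp := phi_nonneg (x - d)
    nlinarith
  have hsplit_f := integral_add_compl hSm hint_f
  have hsplit_g := integral_add_compl hSm hint_g
  have hDpos : 0 < Phi (d - u) + Phi (-d - u) := add_pos (Phi_pos _) (Phi_pos _)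
  rw [le_div_iff₀ hDpos, ← denom_eq d u hu]
  rw [h_total_f] at hsplit_f
  rw [h_total_g] at hsplit_g
  nlinarith [hA, hsplit_f, hsplit_g]
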